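/- Let θ be a steepest-flow trajectory and t0 ≥ 0 with 𝓛(θ(t0)) < 1; assume θ(t) ≠ 0 for all t ≥ t0 and that s ↦ N(θ(s)) and s ↦ log γ̃(θ(s)) are differentiable on (t0, ∞). Then for every t > t0, −(d/dt)𝓛(θ(t)) ≥ L² · γ̃(θ(t0))^{2/L} · 𝓛(θ(t))² · (log(1/𝓛(θ(t))))^{2 − 2/L}. -/

import Mathlib

open Filter

noncomputable section

abbrev E (p : ℕ) : Type := EuclideanSpace ℝ (Fin p)

/-- `N` is a norm on `ℝ^p`. -/
def IsNormOn {p : ℕ} (N : E p → ℝ) : Prop :=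
  (∀ θ, 0 ≤ N θ) ∧ (∀ θ, N θ = 0 ↔ θ = 0) ∧
    (∀ (c : ℝ) (θ : E p), N (c • θ) = |c| * N θ) ∧
    ∀ θ θ' : E p, N (θ + θ') ≤ N θ + N θ'

/-- The dual norm `N_*(z) = sup {⟨z, v⟩ : N v ≤ 1}`. -/
def DualNorm {p : ℕ} (N : E p → ℝ) (z : E p) : ℝ :=
  sSup ((fun v => (inner ℝ z v : ℝ)) '' {v | N v ≤ 1})

/-- The exponential loss `𝓛(θ) = Σ_i exp (-(y_i f(θ, x_i)))`. -/
def ExpLoss {p d m : ℕ} (f : E p → E d → ℝ) (x : Fin m → E d) (y : Fin m → ℝ)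
    (θ : E p) : ℝ :=
  ∑ i, Real.exp (-(y i * f θ (x i)))

/-- A steepest-flow trajectory for the loss `𝓛` with respect to the norm `N`,
with derivative curve `θ'`. -/
def IsSteepestFlow {p : ℕ} (N : E p → ℝ) (𝓛 : E p → ℝ) (θ θ' : ℝ → E p) : Prop :=
  ∀ t, (0:ℝ) ≤ t → HasDerivAt θ (θ' t) t ∧
    (inner ℝ (θ' t) (gradient 𝓛 (θ t)) : ℝ) = -(DualNorm N (gradient 𝓛 (θ t))) ^ 2 ∧
    N (θ' t) = DualNorm N (gradient 𝓛 (θ t))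

/-- The soft margin `γ̃(θ) = -log 𝓛(θ) / N(θ)^L`. -/
def SoftMargin {p : ℕ} (N : E p → ℝ) (𝓛 : E p → ℝ) (L : ℝ) (θ : E p) : ℝ :=
  -Real.log (𝓛 θ) / N θ ^ L


section Aux
lemma IsNormOn.zero {p : ℕ} {N : E p → ℝ} (hN : IsNormOn N) : N 0 = 0 :=
  (hN.2.1 0).mpr rfl


lemma IsNormOn.sum_le {p : ℕ} {N : E p → ℝ} (hN : IsNormOn N) {ι : Type*}
    (s : Finset ι) (g : ι → E p) : N (∑ i ∈ s, g i) ≤ ∑ i ∈ s, N (g i) := by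
  classical
  induction s using Finset.cons_induction with
  | empty => simp [hN.zero]
  | cons a s ha ih =>
    rw [Finset.sum_cons, Finset.sum_cons]
    exact le_trans (hN.2.2.2 _ _) (by linarith)


lemma IsNormOn.le_const_mul {p : ℕ} {N : E p → ℝ} (hN : IsNormOn N) :
    ∃ C : ℝ, 0 ≤ C ∧ ∀ v : E p, N v ≤ C * ‖v‖ := by
  classical
  set b := EuclideanSpace.basisFun (Fin p) ℝ
  refine ⟨∑ i, N (b i), Finset.sum_nonneg fun i _ => hN.1 _, fun v => ?_⟩
  have hv : ∑ i, (v i) • (b i : E p) = v := by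
    exact b.sum_repr v
  calc N v = N (∑ i, (v i) • (b i : E p)) := by rw [hv]
    _ ≤ ∑ i, N ((v i) • (b i : E p)) := hN.sum_le _ _
    _ ≤ ∑ i, N (b i) * ‖v‖ := by
        refine Finset.sum_le_sum fun i _ => ?_
        rw [hN.2.2.1]
        have h1 : |v i| ≤ ‖v‖ := by
          rw [EuclideanSpace.norm_eq]
          rw [show |v i| = Real.sqrt (|v i|^2) by rw [Real.sqrt_sq_eq_abs, abs_abs]]
          apply Real.sqrt_le_sqrt
          have := Finset.single_le_sum (f := fun j => ‖v j‖^2)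
            (fun j _ => sq_nonneg _) (Finset.mem_univ i)
          simpa using this
        have := hN.1 (b i)
        have h2 : 0 ≤ ‖v‖ := norm_nonneg v
        nlinarith
    _ = (∑ i, N (b i)) * ‖v‖ := by rw [Finset.sum_mul]


lemma IsNormOn.continuous {p : ℕ} {N : E p → ℝ} (hN : IsNormOn N) :
    Continuous N := by
  obtain ⟨C, hC0, hC⟩ := hN.le_const_mul
  rw [Metric.continuous_iff]
  intro u ε hε
  rcases eq_or_lt_of_le hC0 with h | hCpos
  · exact ⟨1, one_pos, fun v _ => by
      have h1 := hC v; have h2 := hC u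
      have h3 := hN.1 v; have h4 := hN.1 u
      have : N v = 0 := le_antisymm (by rw [← h] at h1; linarith) h3
      have : N u = 0 := le_antisymm (by rw [← h] at h2; linarith) h4
      simp_all [Real.dist_eq]⟩
  refine ⟨ε / C, by positivity, fun v hv => ?_⟩
  have key : ∀ a b : E p, N a - N b ≤ C * ‖a - b‖ := by
    intro a b
    have := hN.2.2.2 (a - b) b
    simp only [sub_add_cancel] at this
    have := hC (a - b)
    linarith
  have h1 := key v u
  have h2 := key u v
  rw [norm_sub_rev] at h2
  rw [Real.dist_eq, abs_sub_lt_iff]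
  rw [dist_eq_norm] at hv
  constructor
  · calc N v - N u ≤ C * ‖v - u‖ := h1
      _ < C * (ε / C) := by apply mul_lt_mul_of_pos_left hv hCpos
      _ = ε := by field_simp
  · calc N u - N v ≤ C * ‖v - u‖ := h2
      _ < C * (ε / C) := by apply mul_lt_mul_of_pos_left hv hCpos
      _ = ε := by field_simp


lemma IsNormOn.const_mul_le {p : ℕ} (hp : 0 < p) {N : E p → ℝ} (hN : IsNormOn N) :
    ∃ c : ℝ, 0 < c ∧ ∀ v : E p, c * ‖v‖ ≤ N v := by
  have hcs : IsCompact (Metric.sphere (0 : E p) 1) := isCompact_sphere _ _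
  have hne : (Metric.sphere (0 : E p) 1).Nonempty := by
    refine ⟨EuclideanSpace.single ⟨0, hp⟩ 1, ?_⟩
    simp [EuclideanSpace.norm_single]
  obtain ⟨v₀, hv₀, hmin⟩ := hcs.exists_isMinOn hne hN.continuous.continuousOn
  have hv₀ne : v₀ ≠ 0 := by
    intro h
    rw [Metric.mem_sphere, dist_zero_right, h] at hv₀
    simp at hv₀
  have hc : 0 < N v₀ := lt_of_le_of_ne (hN.1 _) (fun h => hv₀ne ((hN.2.1 v₀).mp h.symm))
  refine ⟨N v₀, hc, fun v => ?_⟩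
  rcases eq_or_ne v 0 with rfl | hv
  · simp [hN.zero]
  · have hnv : (0:ℝ) < ‖v‖ := norm_pos_iff.mpr hv
    have hmem : ‖v‖⁻¹ • v ∈ Metric.sphere (0 : E p) 1 := by
      simp [norm_smul, abs_of_pos (inv_pos.mpr hnv), inv_mul_cancel₀ hnv.ne']
    have := hmin hmem
    rw [Set.mem_setOf_eq, hN.2.2.1] at this
    simp only [abs_of_pos (inv_pos.mpr hnv)] at this
    have h2 : N v₀ * ‖v‖ ≤ (‖v‖⁻¹ * N v) * ‖v‖ :=
      mul_le_mul_of_nonneg_right this hnv.le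
    calc N v₀ * ‖v‖ ≤ (‖v‖⁻¹ * N v) * ‖v‖ := h2
      _ = N v := by field_simp


lemma le_dualNorm {p : ℕ} (hp : 0 < p) {N : E p → ℝ} (hN : IsNormOn N)
    (z v : E p) (hv : N v ≤ 1) : (inner ℝ z v : ℝ) ≤ DualNorm N z := by
  obtain ⟨c, hc, hcl⟩ := hN.const_mul_le hp
  apply le_csSup
  · refine ⟨‖z‖ * c⁻¹, fun r hr => ?_⟩
    obtain ⟨w, hw, rfl⟩ := hr
    have h1 : ‖w‖ ≤ c⁻¹ := by
      rw [Set.mem_setOf_eq] at hw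
      have := hcl w
      rw [← le_div_iff₀' hc] at this
      calc ‖w‖ ≤ N w / c := this
        _ ≤ 1 / c := by gcongr
        _ = c⁻¹ := one_div c
    calc (inner ℝ z w : ℝ) ≤ ‖z‖ * ‖w‖ := real_inner_le_norm z w
      _ ≤ ‖z‖ * c⁻¹ := by
        apply mul_le_mul_of_nonneg_left h1 (norm_nonneg z)
  · exact ⟨v, hv, rfl⟩


lemma expLoss_pos {p d m : ℕ} (hm : 0 < m) (f : E p → E d → ℝ) (x : Fin m → E d)
    (y : Fin m → ℝ) (θ : E p) : 0 < ExpLoss f x y θ := by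
  have : (Finset.univ : Finset (Fin m)).Nonempty := by
    exact Finset.univ_nonempty_iff.mpr ⟨⟨0, hm⟩⟩
  exact Finset.sum_pos (fun i _ => Real.exp_pos _) this


lemma expLoss_differentiable {p d m : ℕ} {f : E p → E d → ℝ}
    (hf : ∀ x' : E d, ContDiff ℝ 1 fun θ => f θ x') (x : Fin m → E d) (y : Fin m → ℝ) :
    Differentiable ℝ (ExpLoss f x y) := by
  apply Differentiable.fun_sum
  intro i _
  exact (((hf (x i)).differentiable one_ne_zero).const_mul (y i)).neg.exp


lemma euler_inner {p d m : ℕ} {L : ℝ} (hL : 0 < L) {f : E p → E d → ℝ}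
    (hf : ∀ x' : E d, ContDiff ℝ 1 fun θ => f θ x')
    (hhom : ∀ c : ℝ, 0 < c → ∀ (θ : E p) (x' : E d), f (c • θ) x' = c ^ L * f θ x')
    (x : Fin m → E d) (y : Fin m → ℝ) (θ₀ : E p) :
    (inner ℝ (gradient (ExpLoss f x y) θ₀) θ₀ : ℝ) =
      -(L * ∑ i, (y i * f θ₀ (x i)) * Real.exp (-(y i * f θ₀ (x i)))) := by
  set 𝓛 := ExpLoss f x y with h𝓛
  have hdiff : DifferentiableAt ℝ 𝓛 θ₀ := expLoss_differentiable hf x y θ₀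
  -- way 1
  have hsmul : HasDerivAt (fun c : ℝ => c • θ₀) θ₀ 1 := by
    simpa using (hasDerivAt_id (1:ℝ)).smul_const θ₀
  have hway1 : HasDerivAt (fun c : ℝ => 𝓛 (c • θ₀))
      (inner ℝ (gradient 𝓛 θ₀) θ₀ : ℝ) 1 := by
    have hd2 : HasFDerivAt 𝓛 ((InnerProductSpace.toDual ℝ (E p)) (gradient 𝓛 θ₀))
        ((1:ℝ) • θ₀) := by
      simpa using hdiff.hasGradientAt.hasFDerivAt
    have := hd2.comp_hasDerivAt 1 hsmul
    simpa [Function.comp_def] using this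
  -- way 2
  set a : Fin m → ℝ := fun i => y i * f θ₀ (x i) with ha
  have hway2 : HasDerivAt (fun c : ℝ => 𝓛 (c • θ₀))
      (-(L * ∑ i, a i * Real.exp (-(a i)))) 1 := by
    have hterm : ∀ i : Fin m, HasDerivAt (fun c : ℝ => Real.exp (-(c ^ L * a i)))
        (-(L * (a i * Real.exp (-(a i))))) 1 := by
      intro i
      have h1 : HasDerivAt (fun c : ℝ => c ^ L) L 1 := by
        have := Real.hasDerivAt_rpow_const (x := (1:ℝ)) (p := L) (Or.inl one_ne_zero)
        simpa using this
      have h2 : HasDerivAt (fun c : ℝ => -(c ^ L * a i)) (-(L * a i)) 1 :=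
        (h1.mul_const (a i)).neg
      have h3 := (Real.hasDerivAt_exp (-((1:ℝ) ^ L * a i))).comp 1 h2
      simp only [Real.one_rpow, one_mul] at h3
      rw [show -(L * (a i * Real.exp (-(a i)))) = Real.exp (-(a i)) * -(L * a i) by ring]
      exact h3
    have hsum : HasDerivAt (fun c : ℝ => ∑ i, Real.exp (-(c ^ L * a i)))
        (∑ i, -(L * (a i * Real.exp (-(a i))))) 1 := HasDerivAt.fun_sum (fun i _ => hterm i)
    have heq : (fun c : ℝ => 𝓛 (c • θ₀)) =ᶠ[nhds (1:ℝ)]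
        (fun c : ℝ => ∑ i, Real.exp (-(c ^ L * a i))) := by
      filter_upwards [Ioi_mem_nhds (show (0:ℝ) < 1 by norm_num)] with c hc
      simp only [h𝓛, ExpLoss]
      congr 1
      ext i
      rw [hhom c hc θ₀ (x i)]
      simp only [ha]
      ring_nf
    refine HasDerivAt.congr_of_eventuallyEq ?_ heq
    rw [show -(L * ∑ i, a i * Real.exp (-(a i))) = ∑ i, -(L * (a i * Real.exp (-(a i)))) by
      simp [Finset.mul_sum]]
    exact hsum
  exact hway1.unique hway2


lemma entropy_ineq {m : ℕ} (a : Fin m → ℝ) :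
    (∑ i, Real.exp (-(a i))) * (-Real.log (∑ i, Real.exp (-(a i)))) ≤
      ∑ i, a i * Real.exp (-(a i)) := by
  set S := ∑ i, Real.exp (-(a i)) with hS
  rcases Nat.eq_zero_or_pos m with rfl | hm
  · simp [hS]
  have hSpos : 0 < S := Finset.sum_pos (fun i _ => Real.exp_pos _)
    (Finset.univ_nonempty_iff.mpr ⟨⟨0, hm⟩⟩)
  have key : ∀ i : Fin m, (-Real.log S) * Real.exp (-(a i)) ≤ a i * Real.exp (-(a i)) := by
    intro i
    have h1 : Real.exp (-(a i)) ≤ S :=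
      Finset.single_le_sum (f := fun j => Real.exp (-(a j)))
        (fun j _ => (Real.exp_pos _).le) (Finset.mem_univ i)
    have h2 : -(a i) ≤ Real.log S := by
      rw [← Real.log_exp (-(a i))]
      exact Real.log_le_log (Real.exp_pos _) h1
    have h3 : -Real.log S ≤ a i := by linarith
    exact mul_le_mul_of_nonneg_right h3 (Real.exp_pos _).le
  calc S * (-Real.log S) = ∑ i, (-Real.log S) * Real.exp (-(a i)) := by
        rw [← Finset.mul_sum, ← hS, mul_comm]
    _ ≤ ∑ i, a i * Real.exp (-(a i)) := Finset.sum_le_sum (fun i _ => key i)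


lemma dualNorm_lower {p d m : ℕ} (hp : 0 < p) {L : ℝ} (hL : 0 < L)
    {f : E p → E d → ℝ} (hf : ∀ x' : E d, ContDiff ℝ 1 fun θ => f θ x')
    (hhom : ∀ c : ℝ, 0 < c → ∀ (θ : E p) (x' : E d), f (c • θ) x' = c ^ L * f θ x')
    (x : Fin m → E d) (y : Fin m → ℝ) {N : E p → ℝ} (hN : IsNormOn N)
    {θ₀ : E p} (hθ₀ : θ₀ ≠ 0) :
    L * (ExpLoss f x y θ₀ * (-Real.log (ExpLoss f x y θ₀))) / N θ₀ ≤
      DualNorm N (gradient (ExpLoss f x y) θ₀) := by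
  have hNpos : 0 < N θ₀ :=
    lt_of_le_of_ne (hN.1 _) (fun h => hθ₀ ((hN.2.1 θ₀).mp h.symm))
  set z := gradient (ExpLoss f x y) θ₀ with hz
  set v : E p := (-(N θ₀)⁻¹) • θ₀ with hv
  have hNv : N v ≤ 1 := by
    rw [hv, hN.2.2.1, abs_neg, abs_of_pos (inv_pos.mpr hNpos), inv_mul_cancel₀ hNpos.ne']
  have hle := le_dualNorm hp hN z v hNv
  have hinner : (inner ℝ z v : ℝ) = (N θ₀)⁻¹ * (L * ∑ i, (y i * f θ₀ (x i)) *
      Real.exp (-(y i * f θ₀ (x i)))) := by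
    rw [hv, real_inner_smul_right, hz, euler_inner hL hf hhom x y θ₀]
    ring
  have hent := entropy_ineq (fun i => y i * f θ₀ (x i))
  have : L * (ExpLoss f x y θ₀ * (-Real.log (ExpLoss f x y θ₀))) / N θ₀ ≤
      (inner ℝ z v : ℝ) := by
    rw [hinner, ExpLoss]
    rw [div_eq_inv_mul]
    apply mul_le_mul_of_nonneg_left _ (inv_pos.mpr hNpos).le
    apply mul_le_mul_of_nonneg_left hent hL.le
  linarith


lemma flow_loss_hasDerivAt {p d m : ℕ} {f : E p → E d → ℝ}
    (hf : ∀ x' : E d, ContDiff ℝ 1 fun θ => f θ x') {x : Fin m → E d} {y : Fin m → ℝ}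
    {N : E p → ℝ} {θ θ' : ℝ → E p}
    (hflow : IsSteepestFlow N (ExpLoss f x y) θ θ') {t : ℝ} (ht : 0 ≤ t) :
    HasDerivAt (fun s => ExpLoss f x y (θ s))
      (-(DualNorm N (gradient (ExpLoss f x y) (θ t))) ^ 2) t := by
  obtain ⟨h1, h2, h3⟩ := hflow t ht
  have hdiff : DifferentiableAt ℝ (ExpLoss f x y) (θ t) :=
    expLoss_differentiable hf x y (θ t)
  have hcomp := hdiff.hasGradientAt.hasFDerivAt.comp_hasDerivAt t h1
  have : ((InnerProductSpace.toDual ℝ (E p)) (gradient (ExpLoss f x y) (θ t))) (θ' t)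
      = (inner ℝ (θ' t) (gradient (ExpLoss f x y) (θ t)) : ℝ) := by
    rw [InnerProductSpace.toDual_apply_apply, real_inner_comm]
  rw [this, h2] at hcomp
  exact hcomp


lemma flow_loss_antitone {p d m : ℕ} {f : E p → E d → ℝ}
    (hf : ∀ x' : E d, ContDiff ℝ 1 fun θ => f θ x') {x : Fin m → E d} {y : Fin m → ℝ}
    {N : E p → ℝ} {θ θ' : ℝ → E p}
    (hflow : IsSteepestFlow N (ExpLoss f x y) θ θ') {t0 : ℝ} (ht0 : 0 ≤ t0) :
    AntitoneOn (fun s => ExpLoss f x y (θ s)) (Set.Ici t0) := by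
  apply antitoneOn_of_deriv_nonpos (convex_Ici t0)
  · intro s hs
    exact ((flow_loss_hasDerivAt hf hflow (le_trans ht0 hs)).differentiableAt).continuousAt.continuousWithinAt
  · intro s hs
    rw [interior_Ici] at hs
    exact ((flow_loss_hasDerivAt hf hflow (le_trans ht0 (le_of_lt hs))).differentiableAt).differentiableWithinAt
  · intro s hs
    rw [interior_Ici] at hs
    rw [(flow_loss_hasDerivAt hf hflow (le_trans ht0 (le_of_lt hs))).deriv]
    simp [sq_nonneg]


lemma deriv_N_le {p : ℕ} {N : E p → ℝ} (hN : IsNormOn N) {θ : ℝ → E p} {θ't : E p}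
    {t : ℝ} (hθ : HasDerivAt θ θ't t)
    (hNd : DifferentiableAt ℝ (fun s => N (θ s)) t) :
    deriv (fun s => N (θ s)) t ≤ N θ't := by
  have h1 : Tendsto (slope θ t) (nhdsWithin t (Set.Ioi t)) (nhds θ't) :=
    (hasDerivAt_iff_tendsto_slope.mp hθ).mono_left
      (nhdsWithin_mono t (by intro s hs; exact Set.mem_compl_singleton_iff.mpr (ne_of_gt hs)))
  have h2 : Tendsto (fun s => N (slope θ t s)) (nhdsWithin t (Set.Ioi t)) (nhds (N θ't)) :=
    (hN.continuous.continuousAt.tendsto).comp h1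
  have h3 : Tendsto (slope (fun s => N (θ s)) t) (nhdsWithin t (Set.Ioi t))
      (nhds (deriv (fun s => N (θ s)) t)) :=
    (hasDerivAt_iff_tendsto_slope.mp hNd.hasDerivAt).mono_left
      (nhdsWithin_mono t (by intro s hs; exact Set.mem_compl_singleton_iff.mpr (ne_of_gt hs)))
  refine le_of_tendsto_of_tendsto h3 h2 ?_
  filter_upwards [self_mem_nhdsWithin] with s hs
  have hst : 0 < s - t := sub_pos.mpr hs
  have htri : N (θ s) - N (θ t) ≤ N (θ s - θ t) := by
    have := hN.2.2.2 (θ s - θ t) (θ t)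
    simp only [sub_add_cancel] at this
    linarith
  calc slope (fun s => N (θ s)) t s = (s - t)⁻¹ * (N (θ s) - N (θ t)) := by
        rw [slope_def_field]; rw [div_eq_inv_mul]
    _ ≤ (s - t)⁻¹ * N (θ s - θ t) :=
        mul_le_mul_of_nonneg_left htri (inv_pos.mpr hst).le
    _ = N ((s - t)⁻¹ • (θ s - θ t)) := by
        rw [hN.2.2.1, abs_of_pos (inv_pos.mpr hst)]
    _ = N (slope θ t s) := by rw [slope]; norm_num


lemma softMargin_mono {p d m : ℕ} (hp : 0 < p) (hm : 0 < m) {L : ℝ} (hL : 0 < L)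
    {f : E p → E d → ℝ} (hf : ∀ x' : E d, ContDiff ℝ 1 fun θ => f θ x')
    (hhom : ∀ c : ℝ, 0 < c → ∀ (θ : E p) (x' : E d), f (c • θ) x' = c ^ L * f θ x')
    {x : Fin m → E d} {y : Fin m → ℝ}
    {N : E p → ℝ} (hN : IsNormOn N) {θ θ' : ℝ → E p}
    (hflow : IsSteepestFlow N (ExpLoss f x y) θ θ') {t0 : ℝ} (ht0 : 0 ≤ t0)
    (hsep : ExpLoss f x y (θ t0) < 1)
    (hθ0 : ∀ t, t0 ≤ t → θ t ≠ 0)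
    (hNdiff : ∀ t ∈ Set.Ioi t0, DifferentiableAt ℝ (fun s => N (θ s)) t)
    (hγdiff : ∀ t ∈ Set.Ioi t0, DifferentiableAt ℝ
      (fun s => Real.log (SoftMargin N (ExpLoss f x y) L (θ s))) t) :
    ∀ t, t0 ≤ t → SoftMargin N (ExpLoss f x y) L (θ t0) ≤
      SoftMargin N (ExpLoss f x y) L (θ t) := by
  set 𝓛 := ExpLoss f x y with h𝓛
  have hanti := flow_loss_antitone hf hflow ht0
  have hupos : ∀ s : ℝ, 0 < 𝓛 (θ s) := fun s => expLoss_pos hm f x y (θ s)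
  have hult : ∀ s, t0 ≤ s → 𝓛 (θ s) < 1 := fun s hs =>
    lt_of_le_of_lt (hanti Set.self_mem_Ici hs hs) hsep
  have hw : ∀ s, t0 ≤ s → 0 < -Real.log (𝓛 (θ s)) := fun s hs =>
    neg_pos.mpr (Real.log_neg (hupos s) (hult s hs))
  have hNpos : ∀ s, t0 ≤ s → 0 < N (θ s) := fun s hs =>
    lt_of_le_of_ne (hN.1 _) (fun h => hθ0 s hs ((hN.2.1 _).mp h.symm))
  have hNL : ∀ s, t0 ≤ s → 0 < N (θ s) ^ L := fun s hs =>
    Real.rpow_pos_of_pos (hNpos s hs) L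
  have hmarg : ∀ s, t0 ≤ s → 0 < SoftMargin N 𝓛 L (θ s) := fun s hs => by
    rw [SoftMargin]; exact div_pos (hw s hs) (hNL s hs)
  set φ : ℝ → ℝ := fun s => Real.log (SoftMargin N 𝓛 L (θ s)) with hφ
  have hmono : MonotoneOn φ (Set.Ici t0) := by
    apply monotoneOn_of_deriv_nonneg (convex_Ici t0)
    · -- continuity
      intro s hs
      apply ContinuousAt.continuousWithinAt
      have hθc : ContinuousAt θ s := ((hflow s (le_trans ht0 hs)).1).continuousAt
      have hc1 : ContinuousAt (fun r => -Real.log (𝓛 (θ r))) s :=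
        (ContinuousAt.log
          ((flow_loss_hasDerivAt hf hflow (le_trans ht0 hs)).differentiableAt.continuousAt)
          (hupos s).ne').neg
      have hc2 : ContinuousAt (fun r => N (θ r) ^ L) s :=
        (hN.continuous.continuousAt.comp hθc).rpow_const (Or.inl (hNpos s hs).ne')
      have hc3 : ContinuousAt (fun r => SoftMargin N 𝓛 L (θ r)) s := by
        simp only [SoftMargin]
        exact hc1.div hc2 (hNL s hs).ne'
      exact ContinuousAt.log hc3 (hmarg s hs).ne'
    · -- differentiability
      intro s hs
      rw [interior_Ici] at hs
      exact (hγdiff s hs).differentiableWithinAt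
    · -- deriv nonneg
      intro s hs
      rw [interior_Ici] at hs
      have hs' : t0 ≤ s := le_of_lt hs
      set u := 𝓛 (θ s) with hu
      set D := DualNorm N (gradient 𝓛 (θ s)) with hD
      set Nθ := N (θ s) with hNθ
      set ν := deriv (fun r => N (θ r)) s with hν
      set w := -Real.log u with hwdef
      have hwp : 0 < w := hw s hs'
      have hup : 0 < u := hupos s
      have hNp : 0 < Nθ := hNpos s hs'
      have heq : φ =ᶠ[nhds s]
          fun r => Real.log (-Real.log (𝓛 (θ r))) - L * Real.log (N (θ r)) := by
        filter_upwards [isOpen_Ioi.mem_nhds hs] with r hr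
        have hr' : t0 ≤ r := le_of_lt hr
        rw [hφ]
        simp only [SoftMargin]
        rw [Real.log_div (hw r hr').ne' (hNL r hr').ne', Real.log_rpow (hNpos r hr')]
      have h𝓛d : HasDerivAt (fun r => 𝓛 (θ r)) (-D ^ 2) s :=
        flow_loss_hasDerivAt hf hflow (le_trans ht0 hs')
      have hterm1 : HasDerivAt (fun r => Real.log (-Real.log (𝓛 (θ r))))
          ((D ^ 2 / u) / w) s := by
        have hlog1 : HasDerivAt (fun r => Real.log (𝓛 (θ r))) (-D ^ 2 / u) s :=
          h𝓛d.log hup.ne'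
        have := (hlog1.neg).log hwp.ne'
        convert this using 1
        · rfl
        show D ^ 2 / u / w = -(-D ^ 2 / u) / w
        ring
      have hlogN : HasDerivAt (fun r => Real.log (N (θ r))) (ν / Nθ) s :=
        ((hNdiff s hs).hasDerivAt).log hNp.ne'
      have hφ' : HasDerivAt φ ((D ^ 2 / u) / w - L * (ν / Nθ)) s :=
        HasDerivAt.congr_of_eventuallyEq (hterm1.sub (hlogN.const_mul L)) heq
      rw [hφ'.deriv]
      -- the inequality
      have hDlow : L * (u * w) / Nθ ≤ D :=
        dualNorm_lower hp hL hf hhom x y hN (hθ0 s hs')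
      have hνle : ν ≤ N (θ' s) := deriv_N_le hN (hflow s (le_trans ht0 hs')).1 (hNdiff s hs)
      have hνD : ν ≤ D :=
        hνle.trans (le_of_eq ((hflow s (le_trans ht0 hs')).2.2.trans hD.symm))
      have hDpos : 0 < D := lt_of_lt_of_le (by positivity) hDlow
      have hkey : L * ν / Nθ ≤ D ^ 2 / (u * w) := by
        rw [div_le_div_iff₀ hNp (by positivity)]
        have h1 : L * (u * w) ≤ D * Nθ := (div_le_iff₀ hNp).mp hDlow
        nlinarith [mul_le_mul_of_nonneg_right hνD (by positivity : (0:ℝ) ≤ L * (u * w))]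
      rw [div_div]
      rw [mul_div_assoc] at hkey
      linarith
  intro t ht
  have := hmono Set.self_mem_Ici ht ht
  calc SoftMargin N 𝓛 L (θ t0) = Real.exp (φ t0) := (Real.exp_log (hmarg t0 le_rfl)).symm
    _ ≤ Real.exp (φ t) := Real.exp_le_exp.mpr this
    _ = SoftMargin N 𝓛 L (θ t) := Real.exp_log (hmarg t ht)

end Aux

/-- The hard margin `γ(θ) = (min_i y_i f(θ, x_i)) / N(θ)^L`. -/

def HardMargin {p d m : ℕ} (N : E p → ℝ) (f : E p → E d → ℝ) (x : Fin m → E d)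
    (y : Fin m → ℝ) (L : ℝ) (θ : E p) : ℝ :=
  (⨅ i, y i * f θ (x i)) / N θ ^ L

/-- The alignment `A(t) = ⟨θ(t)/N(θ(t)), -∇𝓛(θ(t))/N_*(∇𝓛(θ(t)))⟩`. -/
def FlowAlignment {p : ℕ} (N : E p → ℝ) (𝓛 : E p → ℝ) (θ : ℝ → E p) (t : ℝ) : ℝ :=
  inner ℝ ((N (θ t))⁻¹ • θ t) (-((DualNorm N (gradient 𝓛 (θ t)))⁻¹ • gradient 𝓛 (θ t)))

theorem stmt_15 {p d m : ℕ} (hp : 0 < p) (hd : 0 < d) (hm : 0 < m)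
    (x : Fin m → E d) (y : Fin m → ℝ) (hy : ∀ i, y i = 1 ∨ y i = -1)
    (L : ℝ) (hL : 0 < L) (f : E p → E d → ℝ)
    (hf : ∀ x' : E d, ContDiff ℝ 1 fun θ => f θ x')
    (hhom : ∀ c : ℝ, 0 < c → ∀ (θ : E p) (x' : E d), f (c • θ) x' = c ^ L * f θ x')
    (N : E p → ℝ) (hN : IsNormOn N)
    (θ θ' : ℝ → E p) (hflow : IsSteepestFlow N (ExpLoss f x y) θ θ')
    (t0 : ℝ) (ht0 : 0 ≤ t0) (hsep : ExpLoss f x y (θ t0) < 1)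
    (hθ0 : ∀ t, t0 ≤ t → θ t ≠ 0)
    (hNdiff : ∀ t ∈ Set.Ioi t0, DifferentiableAt ℝ (fun s => N (θ s)) t)
    (hγdiff : ∀ t ∈ Set.Ioi t0, DifferentiableAt ℝ
      (fun s => Real.log (SoftMargin N (ExpLoss f x y) L (θ s))) t) :
    ∀ t, t0 < t →
      -(deriv (fun s => ExpLoss f x y (θ s)) t) ≥
        L ^ 2 * SoftMargin N (ExpLoss f x y) L (θ t0) ^ ((2:ℝ) / L) *
          ExpLoss f x y (θ t) ^ 2 *
          Real.log (1 / ExpLoss f x y (θ t)) ^ (2 - (2:ℝ) / L) := by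
  intro t ht
  have ht' : t0 ≤ t := le_of_lt ht
  set 𝓛 := ExpLoss f x y with h𝓛
  have hanti := flow_loss_antitone hf hflow ht0
  have hupos : 0 < 𝓛 (θ t) := expLoss_pos hm f x y (θ t)
  have hult : 𝓛 (θ t) < 1 := lt_of_le_of_lt (hanti Set.self_mem_Ici ht' ht') hsep
  set u := 𝓛 (θ t) with hu
  set w := -Real.log u with hwdef
  have hwp : 0 < w := neg_pos.mpr (Real.log_neg hupos hult)
  set Nθ := N (θ t) with hNθ
  have hNp : 0 < Nθ :=
    lt_of_le_of_ne (hN.1 _) (fun h => hθ0 t ht' ((hN.2.1 _).mp h.symm))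
  have hNLp : 0 < Nθ ^ L := Real.rpow_pos_of_pos hNp L
  set D := DualNorm N (gradient 𝓛 (θ t)) with hD
  -- derivative of loss
  have hder : HasDerivAt (fun s => 𝓛 (θ s)) (-D ^ 2) t :=
    flow_loss_hasDerivAt hf hflow (le_trans ht0 ht')
  rw [ge_iff_le, show Real.log (1 / u) = w by rw [one_div, Real.log_inv], hder.deriv,
    neg_neg]
  -- dual norm lower bound
  have hDlow : L * (u * w) / Nθ ≤ D := dualNorm_lower hp hL hf hhom x y hN (hθ0 t ht')
  have h2 : (L * (u * w) / Nθ) ^ 2 ≤ D ^ 2 :=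
    pow_le_pow_left₀ (by positivity) hDlow 2
  -- margins
  set γt := SoftMargin N 𝓛 L (θ t) with hγt
  set γ0 := SoftMargin N 𝓛 L (θ t0) with hγ0
  have hγteq : γt = w / Nθ ^ L := by rw [hγt, SoftMargin]
  have hγ0pos : 0 < γ0 := by
    rw [hγ0, SoftMargin]
    have h1 : 0 < N (θ t0) :=
      lt_of_le_of_ne (hN.1 _) (fun h => hθ0 t0 le_rfl ((hN.2.1 _).mp h.symm))
    have h2 : 0 < -Real.log (𝓛 (θ t0)) :=
      neg_pos.mpr (Real.log_neg (expLoss_pos hm f x y (θ t0)) hsep)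
    exact div_pos h2 (Real.rpow_pos_of_pos h1 L)
  have hmono : γ0 ≤ γt :=
    softMargin_mono hp hm hL hf hhom hN hflow ht0 hsep hθ0 hNdiff hγdiff t ht'
  have h3 : γ0 ^ ((2:ℝ)/L) ≤ γt ^ ((2:ℝ)/L) :=
    Real.rpow_le_rpow hγ0pos.le hmono (by positivity)
  -- algebraic identity
  have hNθ2 : (Nθ ^ L) ^ ((2:ℝ)/L) = Nθ ^ 2 := by
    rw [← Real.rpow_mul hNp.le]
    rw [show L * ((2:ℝ)/L) = 2 by field_simp]
    rw [show ((2:ℝ):ℝ) = ((2:ℕ):ℝ) by norm_num, Real.rpow_natCast]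
  have hw2 : w ^ ((2:ℝ)/L) * w ^ (2 - (2:ℝ)/L) = w ^ 2 := by
    rw [← Real.rpow_add hwp]
    rw [show (2:ℝ)/L + (2 - (2:ℝ)/L) = 2 by ring]
    rw [show ((2:ℝ):ℝ) = ((2:ℕ):ℝ) by norm_num, Real.rpow_natCast]
  have hsplit : γt ^ ((2:ℝ)/L) * w ^ (2 - (2:ℝ)/L) = w ^ 2 / Nθ ^ 2 := by
    rw [hγteq, Real.div_rpow hwp.le hNLp.le, hNθ2, div_mul_eq_mul_div, hw2]
  calc L ^ 2 * γ0 ^ ((2:ℝ)/L) * u ^ 2 * w ^ (2 - (2:ℝ)/L)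
      ≤ L ^ 2 * γt ^ ((2:ℝ)/L) * u ^ 2 * w ^ (2 - (2:ℝ)/L) := by
        have hwnn : 0 ≤ w ^ (2 - (2:ℝ)/L) := Real.rpow_nonneg hwp.le _
        have : 0 ≤ L ^ 2 * u ^ 2 * w ^ (2 - (2:ℝ)/L) := by positivity
        nlinarith [mul_le_mul_of_nonneg_right h3 this]
    _ = L ^ 2 * u ^ 2 * (γt ^ ((2:ℝ)/L) * w ^ (2 - (2:ℝ)/L)) := by ring
    _ = L ^ 2 * u ^ 2 * (w ^ 2 / Nθ ^ 2) := by rw [hsplit]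
    _ = (L * (u * w) / Nθ) ^ 2 := by field_simp
    _ ≤ D ^ 2 := h2
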